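/- Every continuous map from a compact topological space K to the colimit of a sequence X₀ → X₁ → X₂ → ⋯ of closed T₁-inclusions of topological spaces factors through some X_n. In particular, compact spaces are ℵ₀-small relative to closed T₁-inclusions. -/

import Mathlib

open CategoryTheory Limits Topology

section Aux

variable (X : ℕ ⥤ TopCat)
    (hcl : ∀ n : ℕ, IsClosedEmbedding (X.map (homOfLE (Nat.le_succ n))))

include hcl in
lemma aux_map_closedEmbedding {n m : ℕ} (h : n ≤ m) :
    IsClosedEmbedding (X.map (homOfLE h)) := by
  induction m, h using Nat.le_induction with
  | base =>
      have : homOfLE (le_refl n) = 𝟙 n := rfl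
      rw [this, X.map_id]
      exact IsClosedEmbedding.id
  | succ m hm ih =>
      have : homOfLE (Nat.le_succ_of_le hm) = homOfLE hm ≫ homOfLE (Nat.le_succ m) :=
        Subsingleton.elim _ _
      rw [show (homOfLE (hm.trans (Nat.le_succ m)) : n ⟶ m + 1) =
          homOfLE hm ≫ homOfLE (Nat.le_succ m) from Subsingleton.elim _ _, X.map_comp]
      exact (hcl m).comp ih

include hcl in
lemma aux_iota_inj (n : ℕ) : Function.Injective (colimit.ι X n) := by
  intro x y h
  obtain ⟨k, f, g, hk⟩ := Concrete.colimit_exists_of_rep_eq X x y h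
  obtain rfl : f = g := Subsingleton.elim f g
  have hf : f = homOfLE f.le := Subsingleton.elim _ _
  rw [hf] at hk
  exact (aux_map_closedEmbedding X hcl f.le).injective hk

lemma aux_w {n m : ℕ} (h : n ≤ m) (x : X.obj n) :
    colimit.ι X m (X.map (homOfLE h) x) = colimit.ι X n x := by
  rw [← comp_apply, colimit.w]

lemma aux_range_mono {n m : ℕ} (h : n ≤ m) :
    Set.range (colimit.ι X n) ⊆ Set.range (colimit.ι X m) := by
  rintro _ ⟨x, rfl⟩
  exact ⟨X.map (homOfLE h) x, aux_w X h x⟩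

lemma aux_isClosed_iff (S : Set ↑(colimit X)) :
    IsClosed S ↔ ∀ n, IsClosed (colimit.ι X n ⁻¹' S) := by
  rw [← isOpen_compl_iff, TopCat.colimit_isOpen_iff]
  simp only [Set.preimage_compl, isOpen_compl_iff]

include hcl in
lemma aux_iota_closedEmbedding (n : ℕ) : IsClosedEmbedding (colimit.ι X n) := by
  refine IsClosedEmbedding.of_continuous_injective_isClosedMap
    (colimit.ι X n).hom.continuous (aux_iota_inj X hcl n) ?_
  intro C hC
  rw [aux_isClosed_iff]
  intro m
  rcases le_or_gt n m with h | h
  · have heq : colimit.ι X m ⁻¹' (colimit.ι X n '' C) = X.map (homOfLE h) '' C := by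
      ext x
      constructor
      · rintro ⟨c, hc, hx⟩
        refine ⟨c, hc, aux_iota_inj X hcl m ?_⟩
        rw [aux_w X h c, hx]
      · rintro ⟨c, hc, rfl⟩
        exact ⟨c, hc, (aux_w X h c).symm⟩
    rw [heq]
    exact (aux_map_closedEmbedding X hcl h).isClosedMap C hC
  · have heq : colimit.ι X m ⁻¹' (colimit.ι X n '' C) = X.map (homOfLE h.le) ⁻¹' C := by
      ext x
      constructor
      · rintro ⟨c, hc, hx⟩
        have : c = X.map (homOfLE h.le) x := by
          apply aux_iota_inj X hcl n
          rw [hx, aux_w X h.le x]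
        rwa [this] at hc
      · intro hx
        exact ⟨X.map (homOfLE h.le) x, hx, aux_w X h.le x⟩
    rw [heq]
    exact hC.preimage (X.map (homOfLE h.le)).hom.continuous

variable (hT1 : ∀ (n : ℕ) (y : X.obj (n + 1)),
      y ∉ Set.range (X.map (homOfLE (Nat.le_succ n))) → IsClosed {y})

include hcl hT1 in
/-- If a point of the colimit is outside some stage, then its preimage in every stage is
closed. -/
lemma aux_point_closed (p : ↑(colimit X)) (k : ℕ) (hp : p ∉ Set.range (colimit.ι X k))
    (m : ℕ) : IsClosed (colimit.ι X m ⁻¹' {p}) := by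
  classical
  have hex : ∃ N, p ∈ Set.range (colimit.ι X N) := by
    obtain ⟨j, y, rfl⟩ := Concrete.colimit_exists_rep X p
    exact ⟨j, y, rfl⟩
  by_cases hm : p ∈ Set.range (colimit.ι X m)
  · have hpN : p ∈ Set.range (colimit.ι X (Nat.find hex)) := Nat.find_spec hex
    have hNm : Nat.find hex ≤ m := Nat.find_min' hex hm
    have hNpos : 0 < Nat.find hex := by
      rcases Nat.eq_zero_or_pos (Nat.find hex) with h0 | h0
      · exfalso
        apply hp
        apply aux_range_mono X (Nat.zero_le k)
        rwa [h0] at hpN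
      · exact h0
    obtain ⟨q, hq⟩ : ∃ q, Nat.find hex = q + 1 :=
      ⟨Nat.find hex - 1, (Nat.succ_pred_eq_of_pos hNpos).symm⟩
    rw [hq] at hpN hNm
    obtain ⟨y, hy⟩ := hpN
    have hynot : y ∉ Set.range (X.map (homOfLE (Nat.le_succ q))) := by
      rintro ⟨z, rfl⟩
      have : p ∈ Set.range (colimit.ι X q) := ⟨z, by rw [← hy]; exact (aux_w X (Nat.le_succ q) z).symm⟩
      have := Nat.find_min' hex this
      omega
    have hyclosed : IsClosed ({y} : Set (X.obj (q + 1))) := hT1 q y hynot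
    have heq : colimit.ι X m ⁻¹' {p} = {X.map (homOfLE hNm) y} := by
      ext x
      simp only [Set.mem_preimage, Set.mem_singleton_iff]
      constructor
      · intro hx
        apply aux_iota_inj X hcl m
        rw [hx, aux_w X hNm y, hy]
      · rintro rfl
        rw [aux_w X hNm y, hy]
    rw [heq, show ({X.map (homOfLE hNm) y} : Set (X.obj m)) =
        X.map (homOfLE hNm) '' {y} by simp]
    exact (aux_map_closedEmbedding X hcl hNm).isClosedMap _ hyclosed
  · have : colimit.ι X m ⁻¹' {p} = ∅ := by
      ext x
      simp only [Set.mem_preimage, Set.mem_singleton_iff, Set.mem_empty_iff_false, iff_false]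
      intro hx
      exact hm ⟨x, hx⟩
    rw [this]
    exact isClosed_empty

include hcl hT1 in
/-- Any subset of a "bad sequence" is closed in the colimit. -/
lemma aux_subset_closed (s : ℕ → ↑(colimit X))
    (hs : ∀ k, s k ∉ Set.range (colimit.ι X k))
    (T : Set ↑(colimit X)) (hT : T ⊆ Set.range s) : IsClosed T := by
  rw [aux_isClosed_iff]
  intro m
  have heq : colimit.ι X m ⁻¹' T =
      ⋃ p ∈ T ∩ Set.range (colimit.ι X m), colimit.ι X m ⁻¹' {p} := by
    ext x
    simp only [Set.mem_preimage, Set.mem_iUnion, Set.mem_inter_iff, Set.mem_singleton_iff]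
    constructor
    · intro hx
      exact ⟨colimit.ι X m x, ⟨⟨hx, ⟨x, rfl⟩⟩, rfl⟩⟩
    · rintro ⟨p, ⟨hpT, _⟩, rfl⟩
      exact hpT
  rw [heq]
  have hfin : (T ∩ Set.range (colimit.ι X m)).Finite := by
    apply Set.Finite.subset (Set.finite_Iio m |>.image s)
    rintro p ⟨hpT, hpm⟩
    obtain ⟨k, rfl⟩ := hT hpT
    refine ⟨k, ?_, rfl⟩
    simp only [Set.mem_Iio]
    by_contra hk
    push_neg at hk
    exact hs k (aux_range_mono X hk hpm)
  refine hfin.isClosed_biUnion ?_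
  rintro p ⟨hpT, hpm⟩
  obtain ⟨k, rfl⟩ := hT hpT
  exact aux_point_closed X hcl hT1 (s k) k (hs k) m

include hcl hT1 in
lemma aux_exists_stage (S : Set ↑(colimit X)) (hS : IsCompact S) :
    ∃ n, S ⊆ Set.range (colimit.ι X n) := by
  by_contra hcon
  push_neg at hcon
  have hchoice : ∀ n, ∃ p ∈ S, p ∉ Set.range (colimit.ι X n) := fun n =>
    Set.not_subset.mp (hcon n)
  choose s hsS hs using hchoice
  -- every subset of `Set.range s` is closed
  have hclosed : ∀ T ⊆ Set.range s, IsClosed T := fun T hT =>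
    aux_subset_closed X hcl hT1 s hs T hT
  -- `Set.range s` is compact
  have hAcomp : IsCompact (Set.range s) := by
    apply hS.of_isClosed_subset (hclosed _ le_rfl)
    rintro _ ⟨k, rfl⟩
    exact hsS k
  -- `Set.range s` is discrete
  have hdisc : DiscreteTopology (Set.range s) := by
    rw [discreteTopology_iff_isOpen_singleton]
    intro a
    have hopen : IsOpen ((Set.range s \ {(a : ↑(colimit X))})ᶜ) :=
      (hclosed _ Set.diff_subset).isOpen_compl
    have : ({a} : Set (Set.range s)) = Subtype.val ⁻¹' (Set.range s \ {(a : ↑(colimit X))})ᶜ := by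
      ext x
      simp only [Set.mem_singleton_iff, Set.mem_preimage, Set.mem_compl_iff, Set.mem_diff,
        Set.mem_singleton_iff, not_and, not_not]
      constructor
      · rintro rfl; intro _; rfl
      · intro hx
        exact Subtype.ext (hx x.2)
    rw [this]
    exact hopen.preimage continuous_subtype_val
  have hfin : (Set.range s).Finite := hAcomp.finite ⟨hdisc⟩
  -- a finite set lies in some stage
  choose st y hy using fun p : ↑(colimit X) => Concrete.colimit_exists_rep X p
  obtain ⟨M, hM⟩ := (hfin.image st).bddAbove
  have : s M ∈ Set.range (colimit.ι X M) := by
    apply aux_range_mono X (hM ⟨s M, ⟨M, rfl⟩, rfl⟩)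
    exact ⟨y (s M), hy (s M)⟩
  exact hs M this

end Aux

/-- Every continuous map from a compact space `K` to the colimit of a sequence
`X₀ → X₁ → X₂ → ⋯` of closed `T₁`-inclusions (closed embeddings whose complement
points are closed) factors through some stage `X_n`; in particular, compact spaces
are `ℵ₀`-small relative to closed `T₁`-inclusions. -/
theorem compact_factors_through_stage (X : ℕ ⥤ TopCat)
    (hcl : ∀ n : ℕ, IsClosedEmbedding (X.map (homOfLE (Nat.le_succ n))))
    (hT1 : ∀ (n : ℕ) (y : X.obj (n + 1)),
      y ∉ Set.range (X.map (homOfLE (Nat.le_succ n))) → IsClosed {y})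
    (K : Type) [TopologicalSpace K] [CompactSpace K]
    (u : TopCat.of K ⟶ colimit X) :
    ∃ (n : ℕ) (v : TopCat.of K ⟶ X.obj n), u = v ≫ colimit.ι X n := by
  have : CompactSpace ↑(TopCat.of K) := ‹CompactSpace K›
  obtain ⟨n, hn⟩ := aux_exists_stage X hcl hT1 (Set.range u)
    (isCompact_range u.hom.continuous)
  choose v' hv' using fun k : K => hn ⟨k, rfl⟩
  have hvcont : Continuous v' := by
    rw [(aux_iota_closedEmbedding X hcl n).isEmbedding.continuous_iff]
    have : (colimit.ι X n) ∘ v' = u := funext hv'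
    rw [this]
    exact u.hom.continuous
  refine ⟨n, TopCat.ofHom ⟨v', hvcont⟩, ?_⟩
  ext k
  exact (hv' k).symm
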